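/- Let X be a random element of a measurable space, let π = π(X) be a measurable function of X with values in [c, 1−c] for some c ∈ (0, 1/2], let Z₁ = ζ(X) ∈ ℝ^q be a measurable function of X and set Z₀ = ((1−π)/π)·Z₁. Let β₀, β₁ ∈ ℝ^q, let ε(1) and ε(0) be square-integrable real random variables with E[ε(1) | X] = E[ε(0) | X] = 0 almost surely, assume Z₁ has square-integrable components, and define Y(1) = Z₁'β₁ + ε(1) and Y(0) = Z₀'β₀ + ε(0). Then E[ π(1−π)·( Y(1)/π + Y(0)/(1−π) )² ] = E[ (π/(1−π))·( Z₀'(β₁+β₀) )² ] + E[ π(1−π)·( ε(1)/π + ε(0)/(1−π) )² ]. -/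

import Mathlib

open MeasureTheory ProbabilityTheory

theorem cross_zero {Ω : Type*} [mΩ : MeasurableSpace Ω] (P : Measure Ω) [IsProbabilityMeasure P]
    {E : Type*} [MeasurableSpace E] (X : Ω → E) (hXmeas : Measurable X)
    (f : E → ℝ) (hf : Measurable f) (hfL2 : MemLp (fun ω => f (X ω)) 2 P)
    (ε : Ω → ℝ) (hεL2 : MemLp ε 2 P)
    (hcond : P[ε | MeasurableSpace.comap X inferInstance] =ᵐ[P] 0) :
    ∫ ω, f (X ω) * ε ω ∂P = 0 := by
  have hm : MeasurableSpace.comap X inferInstance ≤ mΩ := hXmeas.comap_le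
  have hXm : Measurable[MeasurableSpace.comap X inferInstance] X :=
    Measurable.of_comap_le le_rfl
  have hint : Integrable (fun ω => f (X ω) * ε ω) P := by
    have h := hεL2.smul hfL2 (r := 1)
    have := h.integrable le_rfl
    exact this
  have hfm : StronglyMeasurable[MeasurableSpace.comap X inferInstance] (fun ω => f (X ω)) :=
    ((hf.comp hXm)).stronglyMeasurable
  have hεint : Integrable ε P := hεL2.integrable (by norm_num)
  have h := condExp_mul_of_stronglyMeasurable_left (μ := P) hfm hint hεint
  have hzero : (fun ω => f (X ω)) * P[ε|MeasurableSpace.comap X inferInstance] =ᵐ[P] 0 := by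
    filter_upwards [hcond] with ω hω
    simp only [Pi.mul_apply, Pi.zero_apply] at hω ⊢
    rw [hω, mul_zero]
  calc ∫ ω, f (X ω) * ε ω ∂P
      = ∫ ω, (P[(fun ω => f (X ω)) * ε|MeasurableSpace.comap X inferInstance]) ω ∂P := by
        rw [integral_condExp hm]
        rfl
      _ = 0 := by
        rw [integral_congr_ae (h.trans hzero)]
        simp

/-- With propensity `π(X) ∈ [c, 1−c]`, balancing covariates
`Z₁ = ζ(X) ∈ ℝ^q`, `Z₀ = ((1−π)/π)·Z₁`, and potential outcomes `Y(1) = Z₁'β₁ + ε(1)`,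
`Y(0) = Z₀'β₀ + ε(0)` where `E[ε(d)|X] = 0`, the Poisson-randomization asymptotic variance
decomposes as
`E[π(1−π)(Y(1)/π + Y(0)/(1−π))²] = E[(π/(1−π))(Z₀'(β₁+β₀))²] + E[π(1−π)(ε(1)/π + ε(0)/(1−π))²]`. -/
theorem poisson_variance_decomposition
    {Ω : Type*} [MeasurableSpace Ω] (P : Measure Ω) [IsProbabilityMeasure P]
    {E : Type*} [MeasurableSpace E]
    (q : ℕ) (hq : 0 < q)
    (X : Ω → E) (hXmeas : Measurable X)
    (c : ℝ) (hc0 : 0 < c) (hc : c ≤ 1 / 2)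
    (π : E → ℝ) (hπmeas : Measurable π)
    (hπrange : ∀ x, π x ∈ Set.Icc c (1 - c))
    (ζ : E → Fin q → ℝ) (hζmeas : Measurable ζ)
    (hζL2 : ∀ k, MemLp (fun ω => ζ (X ω) k) 2 P)
    (β₀ β₁ : Fin q → ℝ)
    (ε1 ε0 : Ω → ℝ) (hε1meas : Measurable ε1) (hε0meas : Measurable ε0)
    (hε1L2 : MemLp ε1 2 P) (hε0L2 : MemLp ε0 2 P)
    (hε1cond : P[ε1 | MeasurableSpace.comap X inferInstance] =ᵐ[P] 0)
    (hε0cond : P[ε0 | MeasurableSpace.comap X inferInstance] =ᵐ[P] 0) :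
    ∫ ω, π (X ω) * (1 - π (X ω)) *
        (((∑ k, ζ (X ω) k * β₁ k) + ε1 ω) / π (X ω)
          + ((∑ k, ((1 - π (X ω)) / π (X ω) * ζ (X ω) k) * β₀ k) + ε0 ω)
              / (1 - π (X ω))) ^ 2 ∂P
      = (∫ ω, (π (X ω) / (1 - π (X ω))) *
            (∑ k, ((1 - π (X ω)) / π (X ω) * ζ (X ω) k) * (β₁ k + β₀ k)) ^ 2 ∂P)
        + ∫ ω, π (X ω) * (1 - π (X ω)) *
            (ε1 ω / π (X ω) + ε0 ω / (1 - π (X ω))) ^ 2 ∂P := by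
  -- basic bounds on the propensity
  have hplo : ∀ x, c ≤ π x := fun x => (hπrange x).1
  have hphi : ∀ x, π x ≤ 1 - c := fun x => (hπrange x).2
  have hppos : ∀ x, 0 < π x := fun x => lt_of_lt_of_le hc0 (hplo x)
  have h1ppos : ∀ x, 0 < 1 - π x := fun x => lt_of_lt_of_le hc0 (by linarith [hphi x])
  have hpne : ∀ x, π x ≠ 0 := fun x => (hppos x).ne'
  have h1pne : ∀ x, (1 : ℝ) - π x ≠ 0 := fun x => (h1ppos x).ne'
  -- T : the combined covariate index
  set T : E → ℝ := fun x => ∑ k, (β₁ k + β₀ k) * ζ x k with hTdef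
  have hTmeas : Measurable T :=
    Finset.measurable_sum _ fun k _ =>
      measurable_const.mul ((measurable_pi_apply k).comp hζmeas)
  have hTL2 : MemLp (fun ω => T (X ω)) 2 P := by
    have := memLp_finset_sum (f := fun k ω => (β₁ k + β₀ k) * ζ (X ω) k)
      Finset.univ (fun k _ => (hζL2 k).const_mul (β₁ k + β₀ k))
    simpa [hTdef] using this
  -- bounded weight functions
  have hwbound : ∀ x, ‖(1 - π x) / π x‖ ≤ (1 - c) / c := by
    intro x
    rw [Real.norm_eq_abs, abs_of_nonneg (le_of_lt (div_pos (h1ppos x) (hppos x)))]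
    exact div_le_div₀ (by linarith) (by linarith [hplo x]) hc0 (hplo x)
  have hwbound' : ∀ x, ‖π x / (1 - π x)‖ ≤ (1 - c) / c := by
    intro x
    rw [Real.norm_eq_abs, abs_of_nonneg (le_of_lt (div_pos (hppos x) (h1ppos x)))]
    exact div_le_div₀ (by linarith [hphi x]) (hphi x) hc0 (by linarith [hphi x])
  have hwmeas : Measurable fun x => (1 - π x) / π x :=
    (measurable_const.sub hπmeas).div hπmeas
  have hwmeas' : Measurable fun x => π x / (1 - π x) :=
    hπmeas.div (measurable_const.sub hπmeas)
  -- the four pieces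
  set G1 : Ω → ℝ := fun ω => (π (X ω) / (1 - π (X ω))) *
      (∑ k, ((1 - π (X ω)) / π (X ω) * ζ (X ω) k) * (β₁ k + β₀ k)) ^ 2 with hG1def
  set G3 : Ω → ℝ := fun ω => π (X ω) * (1 - π (X ω)) *
      (ε1 ω / π (X ω) + ε0 ω / (1 - π (X ω))) ^ 2 with hG3def
  set c1 : E → ℝ := fun x => 2 * ((1 - π x) / π x) * T x with hc1def
  set c0 : E → ℝ := fun x => 2 * T x with hc0def
  -- sum simplifications (pointwise)
  have hsum1 : ∀ x, (∑ k, ((1 - π x) / π x * ζ x k) * (β₁ k + β₀ k)) = (1 - π x) / π x * T x := by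
    intro x
    rw [hTdef, Finset.mul_sum]
    exact Finset.sum_congr rfl fun k _ => by ring
  have hsum0 : ∀ x, (∑ k, ((1 - π x) / π x * ζ x k) * β₀ k)
      = (1 - π x) / π x * ∑ k, ζ x k * β₀ k := by
    intro x
    rw [Finset.mul_sum]
    exact Finset.sum_congr rfl fun k _ => by ring
  have hTsplit : ∀ x, T x = (∑ k, ζ x k * β₁ k) + ∑ k, ζ x k * β₀ k := by
    intro x
    rw [hTdef, ← Finset.sum_add_distrib]
    exact Finset.sum_congr rfl fun k _ => by ring
  -- pointwise decomposition
  have key : ∀ ω, π (X ω) * (1 - π (X ω)) *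
        (((∑ k, ζ (X ω) k * β₁ k) + ε1 ω) / π (X ω)
          + ((∑ k, ((1 - π (X ω)) / π (X ω) * ζ (X ω) k) * β₀ k) + ε0 ω)
              / (1 - π (X ω))) ^ 2
      = G1 ω + (c1 (X ω) * ε1 ω + c0 (X ω) * ε0 ω) + G3 ω := by
    intro ω
    have hp := hpne (X ω)
    have h1p := h1pne (X ω)
    rw [hG1def, hG3def, hc1def, hc0def]
    simp only
    rw [hsum1, hsum0, hTsplit (X ω)]
    set a := ∑ k, ζ (X ω) k * β₁ k
    set b := ∑ k, ζ (X ω) k * β₀ k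
    field_simp
    ring
  -- integrability
  have hT2int : Integrable (fun ω => T (X ω) ^ 2) P := hTL2.integrable_sq
  have hG1int : Integrable G1 P := by
    have h : Integrable (fun ω => (1 - π (X ω)) / π (X ω) * T (X ω) ^ 2) P :=
      hT2int.bdd_mul ((hwmeas.comp hXmeas).aestronglyMeasurable)
        (Filter.Eventually.of_forall fun ω => hwbound (X ω))
    refine h.congr (Filter.Eventually.of_forall fun ω => ?_)
    rw [hG1def]
    simp only
    rw [hsum1]
    have hp := hpne (X ω); have h1p := h1pne (X ω)
    field_simp
  have hε1sq : Integrable (fun ω => ε1 ω ^ 2) P := hε1L2.integrable_sq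
  have hε0sq : Integrable (fun ω => ε0 ω ^ 2) P := hε0L2.integrable_sq
  have hε10 : Integrable (fun ω => ε1 ω * ε0 ω) P := by
    have h := hε0L2.smul hε1L2 (r := 1)
    have := h.integrable le_rfl
    exact this
  have hG3int : Integrable G3 P := by
    have h1 : Integrable (fun ω => (1 - π (X ω)) / π (X ω) * ε1 ω ^ 2) P :=
      hε1sq.bdd_mul ((hwmeas.comp hXmeas).aestronglyMeasurable)
        (Filter.Eventually.of_forall fun ω => hwbound (X ω))
    have h2 : Integrable (fun ω => π (X ω) / (1 - π (X ω)) * ε0 ω ^ 2) P :=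
      hε0sq.bdd_mul ((hwmeas'.comp hXmeas).aestronglyMeasurable)
        (Filter.Eventually.of_forall fun ω => hwbound' (X ω))
    have h := (h1.add (hε10.const_mul 2)).add h2
    refine h.congr (Filter.Eventually.of_forall fun ω => ?_)
    rw [hG3def]
    simp only [Pi.add_apply]
    have hp := hpne (X ω); have h1p := h1pne (X ω)
    field_simp
    ring
  have hc1meas : Measurable c1 := (measurable_const.mul hwmeas).mul hTmeas
  have hc0meas : Measurable c0 := measurable_const.mul hTmeas
  have hc1L2 : MemLp (fun ω => c1 (X ω)) 2 P := by
    have hφ : MemLp (fun ω => 2 * ((1 - π (X ω)) / π (X ω))) ⊤ P := by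
      refine memLp_top_of_bound
        (((measurable_const.mul hwmeas).comp hXmeas).aestronglyMeasurable)
        (2 * ((1 - c) / c)) (Filter.Eventually.of_forall fun ω => ?_)
      calc ‖2 * ((1 - π (X ω)) / π (X ω))‖ = 2 * ‖(1 - π (X ω)) / π (X ω)‖ := by
            rw [norm_mul]; norm_num
        _ ≤ 2 * ((1 - c) / c) := by
            have := hwbound (X ω); linarith
    have h := hTL2.smul hφ (r := 2)
    refine (memLp_congr_ae ?_).mp h
    exact Filter.Eventually.of_forall fun ω => by simp [hc1def, smul_eq_mul]
  have hc0L2 : MemLp (fun ω => c0 (X ω)) 2 P := by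
    have h := hTL2.const_mul 2
    refine (memLp_congr_ae ?_).mp h
    exact Filter.Eventually.of_forall fun ω => by simp [hc0def]
  have hcr1int : Integrable (fun ω => c1 (X ω) * ε1 ω) P := by
    have h := hε1L2.smul hc1L2 (r := 1)
    have := h.integrable le_rfl
    exact this
  have hcr0int : Integrable (fun ω => c0 (X ω) * ε0 ω) P := by
    have h := hε0L2.smul hc0L2 (r := 1)
    have := h.integrable le_rfl
    exact this
  -- the cross terms vanish
  have hz1 : ∫ ω, c1 (X ω) * ε1 ω ∂P = 0 :=
    cross_zero P X hXmeas c1 hc1meas hc1L2 ε1 hε1L2 hε1cond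
  have hz0 : ∫ ω, c0 (X ω) * ε0 ω ∂P = 0 :=
    cross_zero P X hXmeas c0 hc0meas hc0L2 ε0 hε0L2 hε0cond
  -- put it all together
  calc ∫ ω, π (X ω) * (1 - π (X ω)) *
        (((∑ k, ζ (X ω) k * β₁ k) + ε1 ω) / π (X ω)
          + ((∑ k, ((1 - π (X ω)) / π (X ω) * ζ (X ω) k) * β₀ k) + ε0 ω)
              / (1 - π (X ω))) ^ 2 ∂P
      = ∫ ω, G1 ω + (c1 (X ω) * ε1 ω + c0 (X ω) * ε0 ω) + G3 ω ∂P :=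
        integral_congr_ae (Filter.Eventually.of_forall key)
    _ = (∫ ω, G1 ω ∂P) + ∫ ω, G3 ω ∂P := by
        have hA : Integrable (fun ω => c1 (X ω) * ε1 ω + c0 (X ω) * ε0 ω) P :=
          hcr1int.add hcr0int
        have hB : Integrable (fun ω => G1 ω + (c1 (X ω) * ε1 ω + c0 (X ω) * ε0 ω)) P :=
          hG1int.add hA
        rw [integral_add hB hG3int, integral_add hG1int hA,
          integral_add hcr1int hcr0int, hz1, hz0]
        ring
    _ = _ := by rw [hG1def, hG3def]
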